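/- Lemma (single-arm reward bound under an arbitrary policy). Let T = (T(t))_{t≥0} be one coordinate of an admissible allocation policy: T is nondecreasing and continuous with T(0) = 0 and T(t) ≤ t for all t, let ζ(u) = inf{ t : T(t) > u } be its right-continuous inverse, and set q_u = exp(−β(ζ(u) − u)), a right-continuous, nonincreasing, bounded process with values in (0,1] that decreases on the right only at times in 𝓜. Let M̲(t) and M̲^q(t) be the pathwise lower envelopes of the Gittins index processes, i.e., the pathwise inverses M̲(t) = sup{ m ≥ 0 : σ_0(m) > t } and M̲^q(t) = sup{ m ≥ 0 : σ^q_0(m) > t } of the optimal restricted stopping times of the retirement problems with discount weights q ≡ 1 and q respectively. Assume, as established by the single-arm theory: (i) M̲^q(t) ≤ M̲(t) pathwise, and (ii) the representation E[∫_0^∞ e^{-βu} q_u X_u du] = β E[∫_0^∞ e^{-βu} q_u M̲^q(u) du]. Then E[∫_0^∞ e^{-βt} X_{T(t)} dT(t)] ≤ β E[∫_0^∞ e^{-βt} M̲(T(t)) dT(t)]. -/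

import Mathlib

open Set Filter Topology MeasureTheory
open scoped ENNReal NNReal

lemma aux_leftLim (S : StieltjesFunction ℝ) (hc : Continuous S) (a : ℝ) :
    Function.leftLim S a = S a :=
  leftLim_eq_of_tendsto
    ((hc.tendsto a).mono_left nhdsWithin_le_nhds)

lemma aux_Icc_null (S : StieltjesFunction ℝ) (hc : Continuous S) {c d : ℝ}
    (h : S d ≤ S c) : S.measure (Icc c d) = 0 := by
  rw [S.measure_Icc, aux_leftLim S hc]
  simp [sub_nonpos.2 h]

lemma aux_fiber (S : StieltjesFunction ℝ) (hc : Continuous S) (v : ℝ) :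
    S.measure {t | S t = v} = 0 := by
  rcases eq_empty_or_nonempty {t | S t = v} with h | ⟨x0, hx0⟩
  · simp [h]
  · have hE : IsClosed {t : ℝ | S t = v} := isClosed_eq hc continuous_const
    have hsub : {t : ℝ | S t = v} ⊆ ⋃ n : ℕ, ({t : ℝ | S t = v} ∩ Icc (x0 - n) (x0 + n)) := by
      intro t ht
      obtain ⟨n, hn⟩ := exists_nat_ge |t - x0|
      exact mem_iUnion.2 ⟨n, ht, by
        rw [abs_le] at hn
        constructor <;> linarith [hn.1, hn.2]⟩
    refine measure_mono_null hsub (measure_iUnion_null fun n => ?_)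
    set K := {t : ℝ | S t = v} ∩ Icc (x0 - n) (x0 + n) with hK
    have hKne : K.Nonempty := ⟨x0, hx0, by constructor <;> simp [Nat.cast_nonneg] <;> linarith [Nat.cast_nonneg (α := ℝ) n]⟩
    have hKclosed : IsClosed K := hE.inter isClosed_Icc
    have hKbb : BddBelow K := ⟨x0 - n, fun x hx => hx.2.1⟩
    have hKba : BddAbove K := ⟨x0 + n, fun x hx => hx.2.2⟩
    have hc1 : sInf K ∈ K := hKclosed.csInf_mem hKne hKbb
    have hc2 : sSup K ∈ K := hKclosed.csSup_mem hKne hKba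
    refine measure_mono_null (fun x hx => ?_) (aux_Icc_null S hc (c := sInf K) (d := sSup K) ?_)
    · exact ⟨csInf_le hKbb hx, le_csSup hKba hx⟩
    · rw [hc1.1, hc2.1]

lemma aux_flat (S : StieltjesFunction ℝ) (hc : Continuous S) :
    S.measure {t | ∃ s, t < s ∧ S s = S t} = 0 := by
  have hsub : {t : ℝ | ∃ s, t < s ∧ S s = S t} ⊆ ⋃ r : ℚ, {t : ℝ | S t = S (r : ℝ)} := by
    rintro t ⟨s, hts, hSs⟩
    obtain ⟨r, htr, hrs⟩ := exists_rat_btwn hts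
    exact mem_iUnion.2 ⟨r, le_antisymm (S.mono htr.le) (by rw [← hSs]; exact S.mono hrs.le)⟩
  exact measure_mono_null hsub (measure_iUnion_null fun r => aux_fiber S hc _)

lemma aux_key (S : StieltjesFunction ℝ) (hc : Continuous S) (h0 : ∀ t : ℝ, t ≤ 0 → S t = 0)
    {a b : ℝ} (ha : 0 ≤ a) (hab : a < b) :
    S.measure ((⇑S) ⁻¹' (Ioc a b) ∩ Ici 0)
      = volume ({u : ℝ | 0 < u ∧ ∃ t, 0 ≤ t ∧ u < S t} ∩ Ioc a b) := by
  have hSnn : ∀ t, 0 ≤ S t := by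
    intro t
    rcases le_or_gt t 0 with h | h
    · exact (h0 t h).ge
    · rw [← h0 0 le_rfl]; exact S.mono h.le
  by_cases hex : ∃ t, a < S t
  · obtain ⟨t1, ht1⟩ := hex
    set c := sInf {t | a < S t} with hc_def
    have hlb : ∀ t ∈ {t : ℝ | a < S t}, (0:ℝ) ≤ t := by
      intro t ht
      simp only [mem_setOf_eq] at ht
      by_contra h
      push_neg at h
      rw [h0 t h.le] at ht
      exact absurd ht (not_lt.2 ha)
    have hne : {t : ℝ | a < S t}.Nonempty := ⟨t1, ht1⟩
    have hbdd : BddBelow {t : ℝ | a < S t} := ⟨0, hlb⟩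
    have hc0 : 0 ≤ c := le_csInf hne hlb
    have habove : ∀ t, c < t → a < S t := by
      intro t ht
      obtain ⟨s, hs, hst⟩ := exists_lt_of_csInf_lt hne ht
      exact lt_of_lt_of_le hs (S.mono hst.le)
    have hSc_le : S c ≤ a := by
      refine le_of_tendsto ((hc.tendsto c).mono_left (nhdsWithin_le_nhds : 𝓝[<] c ≤ 𝓝 c)) ?_
      filter_upwards [self_mem_nhdsWithin] with x hx
      by_contra h
      push_neg at h
      exact absurd (csInf_le hbdd h) (not_le.2 hx)
    have hSc_ge : a ≤ S c := by
      by_contra h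
      push_neg at h
      have h1 : ∀ᶠ x in 𝓝 c, S x < a := (hc.tendsto c).eventually (gt_mem_nhds h)
      have h2 : ∀ᶠ x in 𝓝[>] c, S x < a := h1.filter_mono nhdsWithin_le_nhds
      obtain ⟨x, hx1, hx2⟩ := (h2.and self_mem_nhdsWithin).exists
      exact absurd (habove x hx2) (not_lt.2 hx1.le)
    have hSc : S c = a := le_antisymm hSc_le hSc_ge
    by_cases hexb : ∃ t, b < S t
    · obtain ⟨t2, ht2⟩ := hexb
      set d := sInf {t | b < S t} with hd_def
      have hneb : {t : ℝ | b < S t}.Nonempty := ⟨t2, ht2⟩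
      have hsubb : {t : ℝ | b < S t} ⊆ {t : ℝ | a < S t} := fun t ht => lt_trans hab ht
      have hbddb : BddBelow {t : ℝ | b < S t} := hbdd.mono hsubb
      have hcd : c ≤ d := csInf_le_csInf hbdd hneb hsubb
      have haboveb : ∀ t, d < t → b < S t := by
        intro t ht
        obtain ⟨s, hs, hst⟩ := exists_lt_of_csInf_lt hneb ht
        exact lt_of_lt_of_le hs (S.mono hst.le)
      have hSd_le : S d ≤ b := by
        refine le_of_tendsto ((hc.tendsto d).mono_left (nhdsWithin_le_nhds : 𝓝[<] d ≤ 𝓝 d)) ?_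
        filter_upwards [self_mem_nhdsWithin] with x hx
        by_contra h
        push_neg at h
        exact absurd (csInf_le hbddb h) (not_le.2 hx)
      have hSd_ge : b ≤ S d := by
        by_contra h
        push_neg at h
        have h1 : ∀ᶠ x in 𝓝 d, S x < b := (hc.tendsto d).eventually (gt_mem_nhds h)
        have h2 : ∀ᶠ x in 𝓝[>] d, S x < b := h1.filter_mono nhdsWithin_le_nhds
        obtain ⟨x, hx1, hx2⟩ := (h2.and self_mem_nhdsWithin).exists
        exact absurd (haboveb x hx2) (not_lt.2 hx1.le)
      have hSd : S d = b := le_antisymm hSd_le hSd_ge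
      have hsub1 : Ioo c d ⊆ (⇑S) ⁻¹' (Ioc a b) ∩ Ici 0 := by
        intro t ht
        refine ⟨⟨habove t ht.1, ?_⟩, le_trans hc0 ht.1.le⟩
        by_contra h
        push_neg at h
        exact absurd (csInf_le hbddb h) (not_le.2 ht.2)
      have hsub2 : (⇑S) ⁻¹' (Ioc a b) ∩ Ici 0 ⊆ Icc c d := by
        rintro t ⟨⟨h1, h2⟩, _⟩
        constructor
        · by_contra h
          push_neg at h
          exact notMem_of_lt_csInf (s := {t | a < S t}) h hbdd h1
        · by_contra h
          push_neg at h
          exact absurd (haboveb t h) (not_lt.2 h2)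
      have hIoo : S.measure (Ioo c d) = ENNReal.ofReal (b - a) := by
        rw [S.measure_Ioo (a := c) (b := d), aux_leftLim S hc, hSc, hSd]
      have hIcc : S.measure (Icc c d) = ENNReal.ofReal (b - a) := by
        rw [S.measure_Icc, aux_leftLim S hc, hSc, hSd]
      have hL : S.measure ((⇑S) ⁻¹' (Ioc a b) ∩ Ici 0) = ENNReal.ofReal (b - a) := by
        refine le_antisymm ?_ ?_
        · rw [← hIcc]; exact measure_mono hsub2
        · rw [← hIoo]; exact measure_mono hsub1
      have hR : {u : ℝ | 0 < u ∧ ∃ t, 0 ≤ t ∧ u < S t} ∩ Ioc a b = Ioc a b := by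
        refine inter_eq_right.2 fun u hu => ?_
        refine ⟨lt_of_le_of_lt ha hu.1, ⟨t2, ?_, lt_of_le_of_lt hu.2 ht2⟩⟩
        by_contra h
        push_neg at h
        rw [h0 t2 h.le] at ht2
        exact absurd ht2 (not_lt.2 (le_trans ha hab.le))
      rw [hL, hR, Real.volume_Ioc]
    · push_neg at hexb
      have hbddA : BddAbove (range S) := ⟨b, by rintro y ⟨t, rfl⟩; exact hexb t⟩
      set L := ⨆ t, S t with hL_def
      have htop : Tendsto S atTop (𝓝 L) := tendsto_atTop_ciSup S.mono hbddA
      have hLa : a < L := lt_of_lt_of_le ht1 (le_ciSup hbddA t1)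
      have hLb : L ≤ b := ciSup_le hexb
      have hE : (⇑S) ⁻¹' (Ioc a b) ∩ Ici 0 = Ioi c := by
        ext t
        constructor
        · rintro ⟨⟨h1, h2⟩, _⟩
          rcases lt_or_ge c t with h | h
          · exact h
          · rcases eq_or_lt_of_le h with heq | h'
            · rw [heq] at h1; rw [hSc] at h1; exact absurd h1 (lt_irrefl a)
            · exact absurd h1 (notMem_of_lt_csInf (s := {t | a < S t}) h' hbdd)
        · intro ht
          exact ⟨⟨habove t ht, hexb t⟩, le_trans hc0 (le_of_lt ht)⟩
      have hsing : S.measure {c} = 0 := by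
        rw [S.measure_singleton, aux_leftLim S hc]
        simp
      have hIoi : S.measure (Ioi c) = ENNReal.ofReal (L - a) := by
        have hIci : S.measure (Ici c) = ENNReal.ofReal (L - a) := by
          rw [S.measure_Ici htop, aux_leftLim S hc, hSc]
        refine le_antisymm ?_ ?_
        · rw [← hIci]; exact measure_mono Ioi_subset_Ici_self
        · rw [← hIci, ← Ioi_insert (a := c), insert_eq]
          refine le_trans (measure_union_le _ _) ?_
          rw [hsing, zero_add]
      have hR : {u : ℝ | 0 < u ∧ ∃ t, 0 ≤ t ∧ u < S t} ∩ Ioc a b = Ioo a L := by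
        ext u
        constructor
        · rintro ⟨⟨hu0, t, ht0, htu⟩, hu1, hu2⟩
          exact ⟨hu1, lt_of_lt_of_le htu (le_ciSup hbddA t)⟩
        · rintro ⟨hu1, hu2⟩
          obtain ⟨t, ht⟩ := exists_lt_of_lt_ciSup hu2
          have ht0 : 0 ≤ t := by
            by_contra h
            push_neg at h
            rw [h0 t h.le] at ht
            exact absurd ht (not_lt.2 (le_trans ha hu1.le))
          exact ⟨⟨lt_of_le_of_lt ha hu1, t, ht0, ht⟩, hu1, le_trans hu2.le hLb⟩
      rw [hE, hIoi, hR, Real.volume_Ioo]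
  · push_neg at hex
    have hE : (⇑S) ⁻¹' (Ioc a b) ∩ Ici 0 = ∅ := by
      refine eq_empty_iff_forall_notMem.2 ?_
      rintro t ⟨⟨h1, _⟩, _⟩
      exact absurd h1 (not_lt.2 (hex t))
    have hR : {u : ℝ | 0 < u ∧ ∃ t, 0 ≤ t ∧ u < S t} ∩ Ioc a b = ∅ := by
      refine eq_empty_iff_forall_notMem.2 ?_
      rintro u ⟨⟨hu0, t, ht0, htu⟩, hu1, hu2⟩
      exact absurd (lt_trans hu1 htu) (not_lt.2 (hex t))
    rw [hE, hR]
    simp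

lemma aux_map (S : StieltjesFunction ℝ) (hc : Continuous S) (h0 : ∀ t : ℝ, t ≤ 0 → S t = 0) :
    Measure.map (⇑S) (S.measure.restrict (Ici 0))
      = volume.restrict {u : ℝ | 0 < u ∧ ∃ t, 0 ≤ t ∧ u < S t} := by
  have hSnn : ∀ t, 0 ≤ S t := by
    intro t
    rcases le_or_gt t 0 with h | h
    · exact (h0 t h).ge
    · rw [← h0 0 le_rfl]; exact S.mono h.le
  have hAmeas : MeasurableSet {u : ℝ | 0 < u ∧ ∃ t, 0 ≤ t ∧ u < S t} := by
    refine Set.OrdConnected.measurableSet ⟨?_⟩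
    rintro x hx y hy z hz
    obtain ⟨t, ht0, hty⟩ := hy.2
    exact ⟨lt_of_lt_of_le hx.1 hz.1, t, ht0, lt_of_le_of_lt hz.2 hty⟩
  have hkey : ∀ a b : ℝ, a < b →
      (Measure.map (⇑S) (S.measure.restrict (Ici 0))) (Ioc a b)
        = (volume.restrict {u : ℝ | 0 < u ∧ ∃ t, 0 ≤ t ∧ u < S t}) (Ioc a b) := by
    intro a b hab
    rw [Measure.map_apply hc.measurable measurableSet_Ioc,
      Measure.restrict_apply (hc.measurable measurableSet_Ioc),
      Measure.restrict_apply measurableSet_Ioc, inter_comm (Ioc a b)]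
    rcases le_or_gt b 0 with hb | hb
    · have hL : S.measure ((⇑S) ⁻¹' (Ioc a b) ∩ Ici 0) = 0 := by
        refine measure_mono_null ?_ (aux_fiber S hc 0)
        rintro t ⟨⟨h1, h2⟩, _⟩
        exact le_antisymm (h2.trans hb) (hSnn t)
      have hR : {u : ℝ | 0 < u ∧ ∃ t, 0 ≤ t ∧ u < S t} ∩ Ioc a b = ∅ := by
        refine eq_empty_iff_forall_notMem.2 ?_
        rintro u ⟨⟨hu0, _⟩, _, hu2⟩
        exact absurd (lt_of_lt_of_le hu0 hu2) (not_lt.2 hb)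
      rw [hL, hR, measure_empty]
    · rcases le_or_gt 0 a with ha | ha
      · exact aux_key S hc h0 ha hab
      · have hL : (⇑S) ⁻¹' (Ioc a b) ∩ Ici 0
            = ((⇑S) ⁻¹' (Ioc 0 b) ∩ Ici 0) ∪ ({t | S t = 0} ∩ Ici 0) := by
          ext t
          constructor
          · rintro ⟨⟨h1, h2⟩, h3⟩
            rcases eq_or_lt_of_le (hSnn t) with he | he
            · exact Or.inr ⟨he.symm, h3⟩
            · exact Or.inl ⟨⟨he, h2⟩, h3⟩
          · rintro (⟨⟨h1, h2⟩, h3⟩ | ⟨h1, h3⟩)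
            · exact ⟨⟨lt_trans ha h1, h2⟩, h3⟩
            · exact ⟨⟨by rw [h1]; exact ha, by rw [h1]; exact hb.le⟩, h3⟩
        have hnull : S.measure ({t | S t = 0} ∩ Ici 0) = 0 :=
          measure_mono_null inter_subset_left (aux_fiber S hc 0)
        have hR : {u : ℝ | 0 < u ∧ ∃ t, 0 ≤ t ∧ u < S t} ∩ Ioc a b
            = {u : ℝ | 0 < u ∧ ∃ t, 0 ≤ t ∧ u < S t} ∩ Ioc 0 b := by
          ext u
          constructor
          · rintro ⟨h1, _, hu2⟩
            exact ⟨h1, h1.1, hu2⟩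
          · rintro ⟨h1, _, hu2⟩
            exact ⟨h1, lt_trans ha h1.1, hu2⟩
        rw [hL, hR]
        refine le_antisymm (le_trans (measure_union_le _ _) ?_) ?_
        · rw [hnull, add_zero, aux_key S hc h0 le_rfl hb]
        · rw [← aux_key S hc h0 le_rfl hb]
          exact measure_mono subset_union_left
  refine Measure.ext_of_Ioc' _ _ (fun a b hab => ?_) (fun a b hab => hkey a b hab)
  rw [hkey a b hab, Measure.restrict_apply measurableSet_Ioc]
  exact ne_top_of_le_ne_top (by simp) (measure_mono inter_subset_left)

/-- Lemma 3.4/3.5 of the paper: single-arm reward bound under an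
arbitrary policy. For one coordinate `T` of an admissible allocation, with
right-continuous inverse `ζ(u) = inf{t : T(t) > u}` and induced weight
`q_u = e^{-β(ζ(u)-u)}`, if `M̲^q ≤ M̲` pathwise and the index representation
`E[∫_0^∞ e^{-βu} q_u X_u du] = β E[∫_0^∞ e^{-βu} q_u M̲^q(u) du]` holds, then
`E[∫_0^∞ e^{-βt} X_{T(t)} dT(t)] ≤ β E[∫_0^∞ e^{-βt} M̲(T(t)) dT(t)]`. -/
theorem single_arm_reward_bound
    {Ω : Type*} {m0 : MeasurableSpace Ω} (P : MeasureTheory.Measure Ω)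
    [IsProbabilityMeasure P]
    (β : ℝ) (hβ : 0 < β)
    (𝓜 : Ω → Set ℝ≥0∞)
    (h𝓜closed : ∀ ω, IsClosed (𝓜 ω)) (h𝓜zero : ∀ ω, 0 ∈ 𝓜 ω) (h𝓜top : ∀ ω, ∞ ∈ 𝓜 ω)
    -- the nonnegative reward rate process
    (X : ℝ → Ω → ℝ)
    (hXnonneg : ∀ t ω, 0 ≤ X t ω)
    (hXmeas : Measurable (Function.uncurry X))
    (hXint : ∫⁻ ω, (∫⁻ t in Ioi (0:ℝ), ENNReal.ofReal (Real.exp (-β * t) * X t ω)) ∂P ≠ ∞)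
    -- one coordinate of an admissible allocation policy
    (T : ℝ → Ω → ℝ)
    (hTmono : ∀ ω, Monotone fun t => T t ω)
    (hTcont : ∀ ω, Continuous fun t => T t ω)
    (hT0 : ∀ ω, ∀ t : ℝ, t ≤ 0 → T t ω = 0)
    (hTle : ∀ ω, ∀ t : ℝ, 0 ≤ t → T t ω ≤ t)
    -- its right-continuous inverse `ζ`
    (ζ : ℝ → Ω → ℝ≥0∞)
    (hζ : ∀ (u : ℝ) (ω : Ω), ζ u ω = ⨅ t ∈ {t : ℝ | 0 ≤ t ∧ u < T t ω}, ENNReal.ofReal t)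
    -- the induced discount weight `q_u = exp(-β(ζ(u) - u))`
    (q : ℝ → Ω → ℝ)
    (hq : ∀ (u : ℝ) (ω : Ω),
      q u ω = if ζ u ω = ∞ then 0 else Real.exp (-β * ((ζ u ω).toReal - u)))
    (hq𝓜 : ∀ ω, ∀ t : ℝ, 0 ≤ t → ENNReal.ofReal t ∉ 𝓜 ω →
      ∃ ε > (0:ℝ), ∀ u ∈ Ico t (t + ε), q u ω = q t ω)
    -- the lower envelopes of the Gittins index processes, i.e. the pathwise inverses of
    -- the optimal restricted stopping times `σ_0(m)` and `σ^q_0(m)`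
    (σ σq : ℝ → Ω → ℝ≥0∞)
    (Mlow Mlowq : ℝ → Ω → ℝ)
    (hMlow : ∀ (t : ℝ) (ω : Ω), 0 ≤ t →
      Mlow t ω = sSup {m : ℝ | 0 ≤ m ∧ ENNReal.ofReal t < σ m ω})
    (hMlowq : ∀ (t : ℝ) (ω : Ω), 0 ≤ t →
      Mlowq t ω = sSup {m : ℝ | 0 ≤ m ∧ ENNReal.ofReal t < σq m ω})
    -- (i) the comparison of the two lower envelopes
    (hcompare : ∀ (t : ℝ) (ω : Ω), 0 ≤ t → Mlowq t ω ≤ Mlow t ω)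
    -- (ii) the index representation for the weight `q`
    (hrep : ∫⁻ ω, (∫⁻ u in Ioi (0:ℝ),
          ENNReal.ofReal (Real.exp (-β * u) * q u ω * X u ω)) ∂P
        = ENNReal.ofReal β * ∫⁻ ω, (∫⁻ u in Ioi (0:ℝ),
            ENNReal.ofReal (Real.exp (-β * u) * q u ω * Mlowq u ω)) ∂P)
    -- the pathwise Lebesgue–Stieltjes structure of `T`
    (ST : Ω → StieltjesFunction ℝ)
    (hST : ∀ (ω : Ω) (t : ℝ), ST ω t = T t ω) :
    ∫⁻ ω, (∫⁻ t in Ici (0:ℝ),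
        ENNReal.ofReal (Real.exp (-β * t) * X (T t ω) ω) ∂(ST ω).measure) ∂P
      ≤ ENNReal.ofReal β * ∫⁻ ω, (∫⁻ t in Ici (0:ℝ),
          ENNReal.ofReal (Real.exp (-β * t) * Mlow (T t ω) ω) ∂(ST ω).measure) ∂P := by
  classical
  -- basic facts about T
  have hTnonneg : ∀ ω t, 0 ≤ T t ω := by
    intro ω t
    rcases le_or_gt t 0 with h | h
    · exact (hT0 ω t h).ge
    · rw [← hT0 ω 0 le_rfl]; exact hTmono ω h.le
  have hfS : ∀ ω, ⇑(ST ω) = fun t => T t ω := fun ω => funext (hST ω)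
  -- the sets A ω
  set A : Ω → Set ℝ := fun ω => {u : ℝ | 0 < u ∧ ∃ t, 0 ≤ t ∧ u < T t ω} with hA_def
  have hAmeas : ∀ ω, MeasurableSet (A ω) := by
    intro ω
    refine Set.OrdConnected.measurableSet ⟨?_⟩
    rintro x hx y hy z hz
    obtain ⟨t, ht0, hty⟩ := hy.2
    exact ⟨lt_of_lt_of_le hx.1 hz.1, t, ht0, lt_of_le_of_lt hz.2 hty⟩
  have hAsub : ∀ ω, A ω ⊆ Ioi (0:ℝ) := fun ω u hu => hu.1
  -- the map identity
  have hmap : ∀ ω, Measure.map (fun t => T t ω) ((ST ω).measure.restrict (Ici 0))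
      = volume.restrict (A ω) := by
    intro ω
    have h1 := aux_map (ST ω) (by rw [hfS ω]; exact hTcont ω)
      (fun t ht => by rw [hST]; exact hT0 ω t ht)
    simp only [hfS ω] at h1
    exact h1
  -- facts about ζ
  have hz_top : ∀ (u : ℝ) (ω : Ω), ζ u ω = ∞ ↔ ¬ ∃ t, 0 ≤ t ∧ u < T t ω := by
    intro u ω
    rw [hζ]
    constructor
    · rintro h ⟨t, ht⟩
      have h2 : (⨅ t ∈ {t : ℝ | 0 ≤ t ∧ u < T t ω}, ENNReal.ofReal t) ≤ ENNReal.ofReal t :=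
        biInf_le _ ht
      rw [h] at h2
      exact ENNReal.ofReal_ne_top (top_le_iff.1 h2)
    · intro h
      refine top_le_iff.1 (le_iInf₂ fun t ht => (h ⟨t, ht⟩).elim)
  have hz_ge : ∀ (ω : Ω) (t : ℝ), 0 ≤ t → ENNReal.ofReal t ≤ ζ (T t ω) ω := by
    intro ω t ht
    rw [hζ]
    refine le_iInf₂ fun s hs => ENNReal.ofReal_le_ofReal ?_
    by_contra h
    push_neg at h
    exact absurd (hTmono ω h.le) (not_le.2 hs.2)
  have hz_flat : ∀ (ω : Ω) (t : ℝ), 0 ≤ t → (¬ ∃ s, t < s ∧ T s ω = T t ω) →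
      ζ (T t ω) ω = ENNReal.ofReal t := by
    intro ω t ht hflat
    refine le_antisymm ?_ (hz_ge ω t ht)
    refine ENNReal.le_of_forall_pos_le_add fun ε hε _ => ?_
    have hε' : (0:ℝ) < (ε:ℝ) := hε
    have hmem : (t + ε) ∈ {s : ℝ | 0 ≤ s ∧ T t ω < T s ω} := by
      refine ⟨by linarith, ?_⟩
      refine lt_of_le_of_ne (hTmono ω (by linarith : t ≤ t + (ε:ℝ))) ?_
      intro he
      exact hflat ⟨t + ε, by linarith, he.symm⟩
    calc ζ (T t ω) ω ≤ ENNReal.ofReal (t + ε) := by rw [hζ]; exact biInf_le _ hmem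
      _ = ENNReal.ofReal t + ENNReal.ofReal ε := ENNReal.ofReal_add ht ε.2
      _ = ENNReal.ofReal t + ε := by rw [ENNReal.ofReal_coe_nnreal]
  have hz_inv : ∀ (ω : Ω) (u : ℝ), u ∈ A ω →
      ∃ r : ℝ, 0 ≤ r ∧ ζ u ω = ENNReal.ofReal r ∧ T r ω = u := by
    intro ω u hu
    obtain ⟨hu0, hexu⟩ := hu
    set s : Set ℝ := {t : ℝ | 0 ≤ t ∧ u < T t ω} with hs_def
    have hne : s.Nonempty := hexu
    have hbdd : BddBelow s := ⟨0, fun x hx => hx.1⟩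
    set r := sInf s with hr_def
    have hr0 : 0 ≤ r := le_csInf hne (fun x hx => hx.1)
    refine ⟨r, hr0, ?_, ?_⟩
    · rw [hζ]
      rw [← sInf_image (s := s) (f := fun t => ENNReal.ofReal t),
        ← Monotone.map_csInf_of_continuousAt
          (ENNReal.continuous_ofReal.continuousAt)
          (fun x y h => ENNReal.ofReal_le_ofReal h) hne hbdd]
    · have hge : u ≤ T r ω := by
        refine ge_of_tendsto (((hTcont ω).tendsto r).mono_left
          (nhdsWithin_le_nhds : 𝓝[>] r ≤ 𝓝 r)) ?_
        filter_upwards [self_mem_nhdsWithin] with x hx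
        obtain ⟨y, hy, hyx⟩ := exists_lt_of_csInf_lt hne hx
        exact le_trans hy.2.le (hTmono ω hyx.le)
      have hle : T r ω ≤ u := by
        refine le_of_tendsto (((hTcont ω).tendsto r).mono_left
          (nhdsWithin_le_nhds : 𝓝[<] r ≤ 𝓝 r)) ?_
        filter_upwards [self_mem_nhdsWithin] with x hx
        rcases le_or_gt 0 x with hx0 | hx0
        · have : x ∉ s := notMem_of_lt_csInf (s := s) hx hbdd
          rw [hs_def] at this
          simp only [mem_setOf_eq, not_and, not_lt] at this
          exact this hx0
        · rw [hT0 ω x hx0.le]; exact hu0.le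
      exact le_antisymm hle hge
  -- facts about q
  have hq_nonneg : ∀ (u : ℝ) (ω : Ω), 0 ≤ q u ω := by
    intro u ω
    rw [hq]
    split
    · exact le_rfl
    · exact (Real.exp_pos _).le
  have hq_zero : ∀ (ω : Ω) (u : ℝ), 0 < u → u ∉ A ω → q u ω = 0 := by
    intro ω u hu0 hu
    rw [hq, if_pos]
    rw [hz_top]
    intro hex
    exact hu ⟨hu0, hex⟩
  have hzmono : ∀ ω, Monotone fun u => ζ u ω := by
    intro ω u v huv
    simp only [hζ]
    exact biInf_mono fun t ht => ⟨ht.1, lt_of_le_of_lt huv ht.2⟩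
  have hqmeas : ∀ ω, Measurable fun u => q u ω := by
    intro ω
    have hzm : Measurable fun u => ζ u ω := (hzmono ω).measurable
    have heq : (fun u => q u ω)
        = fun u => if ζ u ω = ∞ then 0 else Real.exp (-β * ((ζ u ω).toReal - u)) :=
      funext fun u => hq u ω
    rw [heq]
    refine Measurable.ite (hzm (measurableSet_singleton ∞)) measurable_const ?_
    exact Real.measurable_exp.comp
      (((ENNReal.measurable_toReal.comp hzm).sub measurable_id).const_mul (-β))
  have hXm : ∀ ω, Measurable fun u => X u ω := by
    intro ω
    exact hXmeas.comp (measurable_id.prodMk measurable_const)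
  have hTm : ∀ ω, Measurable fun t => T t ω := fun ω => (hTcont ω).measurable
  -- key identity for X
  have key1 : ∀ ω, (∫⁻ t in Ici (0:ℝ),
      ENNReal.ofReal (Real.exp (-β * t) * X (T t ω) ω) ∂(ST ω).measure)
      = ∫⁻ u in Ioi (0:ℝ), ENNReal.ofReal (Real.exp (-β * u) * q u ω * X u ω) := by
    intro ω
    set Ψ : ℝ → ℝ≥0∞ := fun u => ENNReal.ofReal (Real.exp (-β * u) * q u ω * X u ω) with hΨ
    have hΨm : Measurable Ψ := by
      refine ENNReal.measurable_ofReal.comp ?_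
      exact ((Real.measurable_exp.comp (measurable_id.const_mul (-β))).mul (hqmeas ω)).mul (hXm ω)
    have step1 : (∫⁻ t in Ici (0:ℝ),
        ENNReal.ofReal (Real.exp (-β * t) * X (T t ω) ω) ∂(ST ω).measure)
        = ∫⁻ t in Ici (0:ℝ), Ψ (T t ω) ∂(ST ω).measure := by
      refine lintegral_congr_ae ?_
      have hflat : (ST ω).measure {t | ∃ s, t < s ∧ T s ω = T t ω} = 0 := by
        have h1 := aux_flat (ST ω) (by rw [hfS ω]; exact hTcont ω)
        simp only [hfS ω] at h1
        exact h1
      have h1 : ∀ᵐ t ∂((ST ω).measure.restrict (Ici 0)), ¬ ∃ s, t < s ∧ T s ω = T t ω := by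
        refine ae_restrict_of_ae ?_
        rw [ae_iff]
        simpa using hflat
      have h2 : ∀ᵐ t ∂((ST ω).measure.restrict (Ici 0)), t ∈ Ici (0:ℝ) :=
        ae_restrict_mem measurableSet_Ici
      filter_upwards [h1, h2] with t hflat' ht
      have hzeq : ζ (T t ω) ω = ENNReal.ofReal t := hz_flat ω t ht hflat'
      have hqeq : q (T t ω) ω = Real.exp (-β * (t - T t ω)) := by
        rw [hq, hzeq, if_neg ENNReal.ofReal_ne_top, ENNReal.toReal_ofReal ht]
      rw [hΨ]
      simp only
      rw [hqeq, ← Real.exp_add]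
      congr 2
      ring
    have step2 : ∫⁻ t in Ici (0:ℝ), Ψ (T t ω) ∂(ST ω).measure
        = ∫⁻ u, Ψ u ∂(volume.restrict (A ω)) := by
      rw [← hmap ω, lintegral_map hΨm (hTm ω)]
    have step3 : ∫⁻ u, Ψ u ∂(volume.restrict (A ω))
        = ∫⁻ u in Ioi (0:ℝ), Ψ u := by
      have hsplit : volume.restrict (Ioi (0:ℝ))
          = volume.restrict (A ω) + volume.restrict (Ioi 0 \ A ω) := by
        rw [← Measure.restrict_union disjoint_sdiff_self_right
          (measurableSet_Ioi.diff (hAmeas ω)), union_diff_cancel (hAsub ω)]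
      have hzero : ∫⁻ u, Ψ u ∂(volume.restrict (Ioi 0 \ A ω)) = 0 := by
        refine (lintegral_congr_ae ?_).trans lintegral_zero
        filter_upwards [ae_restrict_mem (measurableSet_Ioi.diff (hAmeas ω))] with u hu
        rw [hΨ]
        simp [hq_zero ω u hu.1 hu.2]
      rw [hsplit, lintegral_add_measure, hzero, add_zero]
    exact step1.trans (step2.trans step3)
  -- key inequality for Mlow
  have key2 : ∀ ω, (∫⁻ u in Ioi (0:ℝ),
      ENNReal.ofReal (Real.exp (-β * u) * q u ω * Mlow u ω))
      ≤ ∫⁻ t in Ici (0:ℝ),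
        ENNReal.ofReal (Real.exp (-β * t) * Mlow (T t ω) ω) ∂(ST ω).measure := by
    intro ω
    set Φ : ℝ → ℝ≥0∞ := fun u => ENNReal.ofReal (Real.exp (-β * u) * q u ω * Mlow u ω) with hΦ
    have hsplit : volume.restrict (Ioi (0:ℝ))
        = volume.restrict (A ω) + volume.restrict (Ioi 0 \ A ω) := by
      rw [← Measure.restrict_union disjoint_sdiff_self_right
        (measurableSet_Ioi.diff (hAmeas ω)), union_diff_cancel (hAsub ω)]
    have hzero : ∫⁻ u, Φ u ∂(volume.restrict (Ioi 0 \ A ω)) = 0 := by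
      refine (lintegral_congr_ae ?_).trans lintegral_zero
      filter_upwards [ae_restrict_mem (measurableSet_Ioi.diff (hAmeas ω))] with u hu
      rw [hΦ]
      simp [hq_zero ω u hu.1 hu.2]
    calc ∫⁻ u in Ioi (0:ℝ), Φ u
        = ∫⁻ u, Φ u ∂(volume.restrict (A ω)) := by
          rw [hsplit, lintegral_add_measure, hzero, add_zero]
      _ = ∫⁻ u, Φ u ∂(Measure.map (fun t => T t ω) ((ST ω).measure.restrict (Ici 0))) := by
          rw [hmap ω]
      _ ≤ ∫⁻ t, Φ (T t ω) ∂((ST ω).measure.restrict (Ici 0)) := lintegral_map_le Φ (fun t => T t ω)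
      _ ≤ ∫⁻ t in Ici (0:ℝ),
            ENNReal.ofReal (Real.exp (-β * t) * Mlow (T t ω) ω) ∂(ST ω).measure := by
          refine lintegral_mono_ae ?_
          filter_upwards [ae_restrict_mem measurableSet_Ici] with t ht
          rw [hΦ]
          simp only
          by_cases hz : ζ (T t ω) ω = ∞
          · have hq0 : q (T t ω) ω = 0 := by rw [hq, if_pos hz]
            rw [hq0]
            simp
          · have hzr : t ≤ (ζ (T t ω) ω).toReal := by
              have h1 := ENNReal.toReal_mono hz (hz_ge ω t ht)
              rwa [ENNReal.toReal_ofReal ht] at h1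
            have hqe : q (T t ω) ω = Real.exp (-β * ((ζ (T t ω) ω).toReal - T t ω)) := by
              rw [hq, if_neg hz]
            have hM0 : 0 ≤ Mlow (T t ω) ω := by
              rw [hMlow _ _ (hTnonneg ω t)]
              exact Real.sSup_nonneg (fun m hm => hm.1)
            refine ENNReal.ofReal_le_ofReal ?_
            have hexp : Real.exp (-β * T t ω) * q (T t ω) ω ≤ Real.exp (-β * t) := by
              rw [hqe, ← Real.exp_add]
              refine Real.exp_le_exp.2 ?_
              have h2 := mul_le_mul_of_nonneg_left hzr hβ.le
              nlinarith
            exact mul_le_mul_of_nonneg_right hexp hM0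
  -- put everything together
  calc ∫⁻ ω, (∫⁻ t in Ici (0:ℝ),
        ENNReal.ofReal (Real.exp (-β * t) * X (T t ω) ω) ∂(ST ω).measure) ∂P
      = ∫⁻ ω, (∫⁻ u in Ioi (0:ℝ),
          ENNReal.ofReal (Real.exp (-β * u) * q u ω * X u ω)) ∂P :=
        lintegral_congr fun ω => key1 ω
    _ = ENNReal.ofReal β * ∫⁻ ω, (∫⁻ u in Ioi (0:ℝ),
          ENNReal.ofReal (Real.exp (-β * u) * q u ω * Mlowq u ω)) ∂P := hrep
    _ ≤ ENNReal.ofReal β * ∫⁻ ω, (∫⁻ u in Ioi (0:ℝ),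
          ENNReal.ofReal (Real.exp (-β * u) * q u ω * Mlow u ω)) ∂P := by
        refine mul_le_mul_right (lintegral_mono fun ω => ?_) _
        refine lintegral_mono_ae ?_
        filter_upwards [ae_restrict_mem measurableSet_Ioi] with u hu
        refine ENNReal.ofReal_le_ofReal ?_
        exact mul_le_mul_of_nonneg_left (hcompare u ω (le_of_lt hu))
          (mul_nonneg (Real.exp_pos _).le (hq_nonneg u ω))
    _ ≤ ENNReal.ofReal β * ∫⁻ ω, (∫⁻ t in Ici (0:ℝ),
          ENNReal.ofReal (Real.exp (-β * t) * Mlow (T t ω) ω) ∂(ST ω).measure) ∂P :=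
        mul_le_mul_right (lintegral_mono fun ω => key2 ω) _
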